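/- Let c, ρ, c_b, ρ_b > 0, α := ρc/(ρ_b c_b), c_p > 0 and κ ∈ ℝ. Let n := e₃ (the third standard basis vector of ℝ³), let k ∈ ℝ³ with k ≠ 0 and k·e₃ ≥ 0, set ω := c|k|, cos θ := (k·e₃)/|k|, sin²θ := 1 − cos²θ, k_r := k − 2(k·e₃)e₃, and R := (cos θ − α)/(cos θ + α). Define p(t,x) := exp(i(x·k − ωt)) + R·exp(i(x·k_r − ωt)). Then for all t ∈ ℝ: ∂_t² p(t,0) − κ c_p² (∂₁² p + ∂₂² p)(t,0) = −ω² (1 + R)(1 − κ (c_p²/c²) sin²θ) e^{−iωt}. In particular, the directivity pattern of the piezoelectric measurement model ∂_t²V = ∂_t²p − κ c_p² Δ_⊥ p evaluated at the origin is V/p_inc = (1 + (cos θ − α)/(cos θ + α))(1 − κ (c_p²/c²) sin²θ). -/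

import Mathlib

open Complex

/-- Euclidean dot product on `Fin 3 → ℝ`. -/
def dot3 (x y : Fin 3 → ℝ) : ℝ := ∑ i, x i * y i

/-- Spatial partial derivative of a complex-valued field in the `i`-th direction. -/
noncomputable def pdC (i : Fin 3) (f : (Fin 3 → ℝ) → ℂ) (x : Fin 3 → ℝ) : ℂ :=
  fderiv ℝ f x (Pi.single i 1)

noncomputable def Dk (k : Fin 3 → ℝ) : (Fin 3 → ℝ) →L[ℝ] ℝ :=
  ∑ i, k i • ContinuousLinearMap.proj i

lemma hasFDerivAt_dot3 (k x : Fin 3 → ℝ) :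
    HasFDerivAt (fun y => dot3 y k) (Dk k) x := by
  unfold dot3 Dk
  exact HasFDerivAt.fun_sum fun i _ => (hasFDerivAt_apply i x).mul_const (k i)

lemma Dk_single (k : Fin 3 → ℝ) (i : Fin 3) : Dk k (Pi.single i 1) = k i := by
  simp [Dk, Pi.single_apply]

lemma planewave_hasFDerivAt (A : ℂ) (k : Fin 3 → ℝ) (C : ℂ) (x : Fin 3 → ℝ) :
    HasFDerivAt (fun y : Fin 3 → ℝ => A * Complex.exp (Complex.I * ((dot3 y k : ℝ) - C)))
      ((A * Complex.exp (Complex.I * ((dot3 x k : ℝ) - C)) * Complex.I) •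
        (Complex.ofRealCLM.comp (Dk k))) x := by
  have h1 := hasFDerivAt_dot3 k x
  have h2 := Complex.ofRealCLM.hasFDerivAt.comp x h1
  have h3 := (h2.sub_const C).const_mul Complex.I
  have h4 := h3.cexp.const_mul A
  refine h4.congr_fderiv ?_
  ext v
  simp [mul_comm, mul_assoc, mul_left_comm]

lemma pdC_two (A B : ℂ) (k kr : Fin 3 → ℝ) (C : ℂ) (i : Fin 3) (x : Fin 3 → ℝ) :
    pdC i (fun y => A * Complex.exp (Complex.I * ((dot3 y k : ℝ) - C))
      + B * Complex.exp (Complex.I * ((dot3 y kr : ℝ) - C))) x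
    = (A * Complex.I * (k i : ℂ)) * Complex.exp (Complex.I * ((dot3 x k : ℝ) - C))
      + (B * Complex.I * (kr i : ℂ)) * Complex.exp (Complex.I * ((dot3 x kr : ℝ) - C)) := by
  have h := (planewave_hasFDerivAt A k C x).fun_add (planewave_hasFDerivAt B kr C x)
  rw [pdC, h.fderiv]
  simp [Dk_single, mul_comm, mul_assoc, mul_left_comm]

lemma hasDerivAt_tw (A : ℂ) (a ω t : ℝ) :
    HasDerivAt (fun r : ℝ => A * Complex.exp (Complex.I * ((a : ℂ) - (ω : ℂ) * (r : ℂ))))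
      ((A * (-Complex.I * (ω : ℂ))) * Complex.exp (Complex.I * ((a : ℂ) - (ω : ℂ) * (t : ℂ)))) t := by
  have h0 : HasDerivAt (fun r : ℝ => (r : ℂ)) 1 t := Complex.ofRealCLM.hasDerivAt
  have h1 := h0.const_mul (ω : ℂ)
  have h2 := h1.const_sub (a : ℂ)
  have h3 := h2.const_mul Complex.I
  have h4 := h3.cexp.const_mul A
  refine h4.congr_deriv ?_
  ring

lemma deriv_tw2 (A B : ℂ) (a b ω t : ℝ) :
    deriv (fun r : ℝ => A * Complex.exp (Complex.I * ((a : ℂ) - (ω : ℂ) * (r : ℂ)))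
      + B * Complex.exp (Complex.I * ((b : ℂ) - (ω : ℂ) * (r : ℂ)))) t
    = (A * (-Complex.I * (ω : ℂ))) * Complex.exp (Complex.I * ((a : ℂ) - (ω : ℂ) * (t : ℂ)))
      + (B * (-Complex.I * (ω : ℂ))) * Complex.exp (Complex.I * ((b : ℂ) - (ω : ℂ) * (t : ℂ))) :=
  ((hasDerivAt_tw A a ω t).add (hasDerivAt_tw B b ω t)).deriv


/-- directivity of the piezoelectric sensor on the flat boundary
`{x₃ = 0}` with outward normal `e₃`: for the total field `p` (incident plus
reflected plane wave) one has, at the origin,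
`∂_t² p − κ c_p² Δ_⊥ p = −ω²(1+R)(1 − κ (c_p²/c²) sin²θ) e^{−iωt}`. -/
theorem piezoelectric_directivity
    (c ρ cb ρb cp κ : ℝ) (hc : 0 < c) (hρ : 0 < ρ) (hcb : 0 < cb) (hρb : 0 < ρb)
    (hcp : 0 < cp)
    (α : ℝ) (hα : α = ρ * c / (ρb * cb))
    (n : Fin 3 → ℝ) (hn : n = Pi.single 2 1)
    (k : Fin 3 → ℝ) (hk : k ≠ 0) (hkn : 0 ≤ dot3 k n)
    (ω : ℝ) (hω : ω = c * Real.sqrt (dot3 k k))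
    (cosθ : ℝ) (hcosθ : cosθ = dot3 k n / Real.sqrt (dot3 k k))
    (sin2θ : ℝ) (hsin2θ : sin2θ = 1 - cosθ ^ 2)
    (kr : Fin 3 → ℝ) (hkr : kr = fun i => k i - 2 * dot3 k n * n i)
    (R : ℝ) (hR : R = (cosθ - α) / (cosθ + α))
    (p : ℝ → (Fin 3 → ℝ) → ℂ)
    (hp : ∀ t x, p t x
      = Complex.exp (Complex.I * ((dot3 x k : ℝ) - ω * t))
        + (R : ℂ) * Complex.exp (Complex.I * ((dot3 x kr : ℝ) - ω * t))) :
    ∀ t : ℝ,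
      deriv (fun s => deriv (fun r => p r 0) s) t
          - (κ : ℂ) * (cp : ℂ) ^ 2 * (pdC 0 (pdC 0 (p t)) 0 + pdC 1 (pdC 1 (p t)) 0)
        = -(ω : ℂ) ^ 2 * (1 + (R : ℂ))
            * (1 - (κ : ℂ) * ((cp ^ 2 / c ^ 2 : ℝ) : ℂ) * (sin2θ : ℂ))
            * Complex.exp (-Complex.I * ω * t) := by
  intro t
  -- basic geometric facts
  have hk2 : dot3 k n = k 2 := by subst hn; simp [dot3, Pi.single_apply]
  have hkr0 : kr 0 = k 0 := by subst hkr hn; simp [Pi.single_apply]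
  have hkr1 : kr 1 = k 1 := by subst hkr hn; simp [Pi.single_apply]
  have hSdef : dot3 k k = k 0 ^ 2 + k 1 ^ 2 + k 2 ^ 2 := by
    simp [dot3, Fin.sum_univ_three]; ring
  have hS : 0 < dot3 k k := by
    obtain ⟨i, hi⟩ := Function.ne_iff.mp hk
    rw [hSdef]
    fin_cases i <;> simp at hi <;>
      [nlinarith [sq_nonneg (k 1), sq_nonneg (k 2), mul_self_pos.mpr hi];
       nlinarith [sq_nonneg (k 0), sq_nonneg (k 2), mul_self_pos.mpr hi];
       nlinarith [sq_nonneg (k 0), sq_nonneg (k 1), mul_self_pos.mpr hi]]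
  have hω2 : ω ^ 2 = c ^ 2 * dot3 k k := by
    rw [hω, mul_pow, Real.sq_sqrt hS.le]
  have keyR : ω ^ 2 * κ * (cp ^ 2 / c ^ 2) * sin2θ = κ * cp ^ 2 * (k 0 ^ 2 + k 1 ^ 2) := by
    have hcos2 : cosθ ^ 2 = k 2 ^ 2 / dot3 k k := by
      rw [hcosθ, hk2, div_pow, Real.sq_sqrt hS.le]
    rw [hω2, hsin2θ, hcos2]
    field_simp
    rw [hSdef]; ring
  have key : ((ω : ℂ)) ^ 2 * (κ : ℂ) * ((cp ^ 2 / c ^ 2 : ℝ) : ℂ) * (sin2θ : ℂ)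
      = (κ : ℂ) * (cp : ℂ) ^ 2 * ((k 0 : ℂ) ^ 2 + (k 1 : ℂ) ^ 2) := by
    exact_mod_cast keyR
  -- time derivatives
  have hfun : (fun r => p r 0)
      = fun r : ℝ => 1 * Complex.exp (Complex.I * (((dot3 0 k : ℝ) : ℂ) - (ω : ℂ) * (r : ℂ)))
        + (R : ℂ) * Complex.exp (Complex.I * (((dot3 0 kr : ℝ) : ℂ) - (ω : ℂ) * (r : ℂ))) := by
    funext r; rw [hp, one_mul]
  have hd1 : (fun s => deriv (fun r => p r 0) s)
      = fun s : ℝ => (1 * (-Complex.I * (ω : ℂ)))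
            * Complex.exp (Complex.I * (((dot3 0 k : ℝ) : ℂ) - (ω : ℂ) * (s : ℂ)))
        + ((R : ℂ) * (-Complex.I * (ω : ℂ)))
            * Complex.exp (Complex.I * (((dot3 0 kr : ℝ) : ℂ) - (ω : ℂ) * (s : ℂ))) := by
    funext s; rw [hfun, deriv_tw2]
  -- spatial derivatives
  have hpt : p t = fun y => 1 * Complex.exp (Complex.I * (((dot3 y k : ℝ) : ℂ) - ((ω : ℂ) * (t : ℂ))))
      + (R : ℂ) * Complex.exp (Complex.I * (((dot3 y kr : ℝ) : ℂ) - ((ω : ℂ) * (t : ℂ)))) := by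
    funext y; rw [hp, one_mul]
  have hs0 : pdC 0 (p t)
      = fun x => (1 * Complex.I * (k 0 : ℂ))
            * Complex.exp (Complex.I * (((dot3 x k : ℝ) : ℂ) - ((ω : ℂ) * (t : ℂ))))
        + ((R : ℂ) * Complex.I * (kr 0 : ℂ))
            * Complex.exp (Complex.I * (((dot3 x kr : ℝ) : ℂ) - ((ω : ℂ) * (t : ℂ)))) := by
    funext x; rw [hpt, pdC_two]
  have hs1 : pdC 1 (p t)
      = fun x => (1 * Complex.I * (k 1 : ℂ))
            * Complex.exp (Complex.I * (((dot3 x k : ℝ) : ℂ) - ((ω : ℂ) * (t : ℂ))))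
        + ((R : ℂ) * Complex.I * (kr 1 : ℂ))
            * Complex.exp (Complex.I * (((dot3 x kr : ℝ) : ℂ) - ((ω : ℂ) * (t : ℂ)))) := by
    funext x; rw [hpt, pdC_two]
  rw [hd1, deriv_tw2, hs0, hs1, pdC_two, pdC_two]
  rw [hkr0, hkr1]
  have h0k : dot3 0 k = 0 := by simp [dot3]
  have h0kr : dot3 0 kr = 0 := by simp [dot3]
  rw [h0k, h0kr]
  have hE : Complex.exp (Complex.I * (((0 : ℝ) : ℂ) - (ω : ℂ) * (t : ℂ)))
      = Complex.exp (-Complex.I * (ω : ℂ) * (t : ℂ)) := by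
    congr 1; push_cast; ring
  rw [hE]
  set E := Complex.exp (-Complex.I * (ω : ℂ) * (t : ℂ)) with hEdef
  linear_combination (1 + (R : ℂ)) * E * ((ω : ℂ) ^ 2 - (κ : ℂ) * (cp : ℂ) ^ 2 * ((k 0 : ℂ) ^ 2 + (k 1 : ℂ) ^ 2)) * Complex.I_sq - (1 + (R : ℂ)) * E * key
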